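/- Let n ≥ p be positive integers and let E ⊆ {1,…,n} × {1,…,p} be a support pattern that admits a matching covering every column, i.e., there is an injective map g : {1,…,p} → {1,…,n} with (g(c), c) ∈ E for every column c. Then for Lebesgue-almost every assignment of real values to the entries indexed by E (all entries outside E being zero), the resulting n×p matrix has full column rank p. -/

import Mathlib

open MeasureTheory

lemma poly_ae_ne_zero (P : Polynomial ℝ) (hP : P ≠ 0) :
    ∀ᵐ y : ℝ ∂volume, Polynomial.eval y P ≠ 0 := by
  have h : volume {y : ℝ | Polynomial.eval y P = 0} = 0 :=
    (Polynomial.finite_setOf_isRoot hP).measure_zero volume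
  rw [ae_iff]; simpa only [not_not] using h

lemma mv_ae_ne_zero : ∀ (k : ℕ) (q : MvPolynomial (Fin k) ℝ), q ≠ 0 →
    ∀ᵐ x : (Fin k → ℝ) ∂volume, MvPolynomial.eval x q ≠ 0 := by
  intro k
  induction k with
  | zero =>
    intro q hq
    refine Filter.Eventually.of_forall fun x => ?_
    have hx : x = (isEmptyElim : Fin 0 → ℝ) := funext fun i => i.elim0
    intro h0
    apply hq
    apply (MvPolynomial.isEmptyRingEquiv ℝ (Fin 0)).injective
    rw [map_zero]
    rw [hx] at h0
    rw [← (MvPolynomial.isEmptyRingEquiv ℝ (Fin 0)).symm_apply_apply q,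
      MvPolynomial.isEmptyRingEquiv_symm_apply, MvPolynomial.eval_C] at h0
    exact h0
  | succ k ih =>
    intro q hq
    set P := MvPolynomial.finSuccEquiv ℝ k q with hPdef
    have hP : P ≠ 0 := by
      simpa [hPdef] using (map_ne_zero_iff _ (MvPolynomial.finSuccEquiv ℝ k).injective).2 hq
    have hlead : P.leadingCoeff ≠ 0 := Polynomial.leadingCoeff_ne_zero.2 hP
    have hae : ∀ᵐ s : (Fin k → ℝ) ∂volume,
        ∀ᵐ y : ℝ ∂volume, MvPolynomial.eval (Fin.cons y s) q ≠ 0 := by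
      filter_upwards [ih P.leadingCoeff hlead] with s hs
      have hmap : P.map (MvPolynomial.eval s) ≠ 0 := by
        intro h
        apply hs
        rw [Polynomial.leadingCoeff, ← Polynomial.coeff_map, h, Polynomial.coeff_zero]
      filter_upwards [poly_ae_ne_zero _ hmap] with y hy
      rw [MvPolynomial.eval_eq_eval_mv_eval']
      exact hy
    set S : Set (ℝ × (Fin k → ℝ)) := {z | MvPolynomial.eval (Fin.cons z.1 z.2) q = 0} with hS
    have hSm : MeasurableSet S := by
      have hc : Continuous fun z : ℝ × (Fin k → ℝ) => (Fin.cons z.1 z.2 : Fin (k+1) → ℝ) := by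
        exact continuous_pi fun i => by
          refine Fin.cases ?_ (fun j => ?_) i
          · simpa using continuous_fst
          · simp only [Fin.cons_succ]; fun_prop
      exact ((MvPolynomial.continuous_eval q).comp hc).measurable (measurableSet_singleton 0)
    have hswap : MeasurableSet (Prod.swap ⁻¹' S : Set ((Fin k → ℝ) × ℝ)) :=
      hSm.preimage measurable_swap
    have hnull : (volume : Measure ((Fin k → ℝ) × ℝ)) (Prod.swap ⁻¹' S) = 0 := by
      rw [show (volume : Measure ((Fin k → ℝ) × ℝ)) = Measure.prod volume volume from rfl,
        Measure.measure_prod_null hswap]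
      filter_upwards [hae] with s hs
      have he : (Prod.mk s ⁻¹' (Prod.swap ⁻¹' S))
          = {y | MvPolynomial.eval (Fin.cons y s) q = 0} := rfl
      rw [he, ae_iff] at *
      simpa only [not_not, Pi.zero_apply] using hs
    have hSnull : (volume : Measure (ℝ × (Fin k → ℝ))) S = 0 := by
      have h2 := (Measure.measurePreserving_swap
        (μ := (volume : Measure (Fin k → ℝ))) (ν := (volume : Measure ℝ))).measure_preimage
        hSm.nullMeasurableSet
      calc (volume : Measure (ℝ × (Fin k → ℝ))) S
          = (volume : Measure ((Fin k → ℝ) × ℝ)) (Prod.swap ⁻¹' S) := h2.symm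
        _ = 0 := hnull
    have hmp := MeasureTheory.volume_preserving_piFinSuccAbove (fun _ : Fin (k+1) => ℝ) 0
    have key : (volume : Measure (Fin (k+1) → ℝ)) {x | MvPolynomial.eval x q = 0} = 0 := by
      have hpre : {x : Fin (k+1) → ℝ | MvPolynomial.eval x q = 0}
          = (MeasurableEquiv.piFinSuccAbove (fun _ : Fin (k+1) => ℝ) 0) ⁻¹' S := by
        ext x
        have hfst : ((MeasurableEquiv.piFinSuccAbove (fun _ : Fin (k+1) => ℝ) 0) x).1 = x 0 := rfl
        have hsnd : ((MeasurableEquiv.piFinSuccAbove (fun _ : Fin (k+1) => ℝ) 0) x).2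
            = Fin.tail x := by
          simp [MeasurableEquiv.piFinSuccAbove, Fin.insertNthEquiv, Fin.removeNth_zero]
        simp only [Set.mem_setOf_eq, Set.mem_preimage, hS, hfst, hsnd, Fin.cons_self_tail]
      rw [hpre, hmp.measure_preimage hSm.nullMeasurableSet, hSnull]
    rw [ae_iff]
    simpa only [not_not] using key

lemma mv_ae_ne_zero_fintype {ι : Type*} [Fintype ι] (q : MvPolynomial ι ℝ) (hq : q ≠ 0) :
    ∀ᵐ x : (ι → ℝ) ∂volume, MvPolynomial.eval x q ≠ 0 := by
  classical
  set m := Fintype.card ι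
  set e : ι ≃ Fin m := Fintype.equivFin ι
  set q' : MvPolynomial (Fin m) ℝ := MvPolynomial.rename e q with hq'def
  have hq' : q' ≠ 0 := fun h => hq ((MvPolynomial.rename_injective e e.injective)
    (by rw [← hq'def, h, map_zero]))
  have hmain := mv_ae_ne_zero m q' hq'
  set F := MeasurableEquiv.piCongrLeft (fun _ : Fin m => ℝ) e with hF
  have hmp : MeasurePreserving F volume volume :=
    MeasureTheory.volume_measurePreserving_piCongrLeft (fun _ : Fin m => ℝ) e
  have hSm : MeasurableSet {y : Fin m → ℝ | MvPolynomial.eval y q' = 0} :=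
    (MvPolynomial.continuous_eval q').measurable (measurableSet_singleton 0)
  have hpre : {x : ι → ℝ | MvPolynomial.eval x q = 0}
      = F ⁻¹' {y : Fin m → ℝ | MvPolynomial.eval y q' = 0} := by
    ext x
    simp only [Set.mem_setOf_eq, Set.mem_preimage, hq'def, MvPolynomial.eval_rename]
    have hcomp : (F x) ∘ e = x := by
      funext i
      exact Equiv.piCongrLeft_apply_apply (fun _ : Fin m => ℝ) e x i
    rw [hcomp]
  rw [ae_iff]
  simp only [not_not]
  rw [hpre, hmp.measure_preimage hSm.nullMeasurableSet]
  have := mv_ae_ne_zero m q' hq'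
  rw [ae_iff] at this
  simpa only [not_not] using this

/-- If a support pattern `E ⊆ {1,…,n} × {1,…,p}` (with `n ≥ p`) admits a matching
covering every column, i.e. an injective `g : Fin p → Fin n` with `(g c, c) ∈ E`
for each column `c`, then for Lebesgue-almost every assignment of real values to
the entries indexed by `E` (entries outside `E` being zero), the resulting
`n × p` matrix has full column rank `p`. -/
theorem almost_surely_full_column_rank_of_matching
    (n p : ℕ) (hp : 0 < p) (hnp : p ≤ n)
    (E : Finset (Fin n × Fin p))
    (g : Fin p → Fin n) (hg_inj : Function.Injective g)
    (hg : ∀ c : Fin p, (g c, c) ∈ E) :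
    ∀ᵐ v : (E → ℝ) ∂volume,
      (Matrix.of fun i j =>
        if h : (i, j) ∈ E then v ⟨(i, j), h⟩ else (0 : ℝ)).rank = p := by
  classical
  -- the symbolic matrix of the selected p×p submatrix
  set M : Matrix (Fin p) (Fin p) (MvPolynomial E ℝ) :=
    Matrix.of fun j c => if h : (g j, c) ∈ E then MvPolynomial.X ⟨(g j, c), h⟩ else 0 with hM
  set q : MvPolynomial E ℝ := M.det with hqdef
  have hq : q ≠ 0 := by
    intro h
    set v₀ : E → ℝ := fun z => if (z : Fin n × Fin p).1 = g (z : Fin n × Fin p).2 then 1 else 0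
      with hv₀
    have h1 : MvPolynomial.eval v₀ q = (M.map (MvPolynomial.eval v₀)).det :=
      RingHom.map_det (MvPolynomial.eval v₀) M
    have h2 : M.map (MvPolynomial.eval v₀) = (1 : Matrix (Fin p) (Fin p) ℝ) := by
      ext j c
      by_cases hjc : j = c
      · subst hjc
        simp [hM, Matrix.map_apply, hg j, hv₀, Matrix.one_apply]
      · simp only [hM, Matrix.map_apply, Matrix.of_apply, Matrix.one_apply, if_neg hjc]
        by_cases hmem : (g j, c) ∈ E
        · simp only [dif_pos hmem, MvPolynomial.eval_X, hv₀]
          exact if_neg (fun hggc => hjc (hg_inj hggc))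
        · simp [dif_neg hmem]
    rw [h, map_zero] at h1
    rw [h2, Matrix.det_one] at h1
    exact one_ne_zero h1.symm
  filter_upwards [mv_ae_ne_zero_fintype q hq] with v hv
  set A : Matrix (Fin n) (Fin p) ℝ :=
    Matrix.of fun i j => if h : (i, j) ∈ E then v ⟨(i, j), h⟩ else (0 : ℝ) with hA
  have hsub : M.map (MvPolynomial.eval v) = A.submatrix g id := by
    ext j c
    by_cases hmem : (g j, c) ∈ E <;>
      simp [hM, hA, Matrix.map_apply, Matrix.submatrix_apply, hmem]
  have hdet : (A.submatrix g id).det ≠ 0 := by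
    rw [← hsub]
    intro h0
    apply hv
    rw [hqdef, RingHom.map_det]
    exact h0
  have hBinj : Function.Injective ((A.submatrix g id).mulVec) :=
    Matrix.mulVec_injective_iff_isUnit.2 ((Matrix.isUnit_iff_isUnit_det _).2 hdet.isUnit)
  have hAinj : Function.Injective A.mulVecLin := by
    intro x y hxy
    apply hBinj
    funext j
    show Matrix.mulVec (A.submatrix g id) x j = Matrix.mulVec (A.submatrix g id) y j
    have hx : ∀ z : Fin p → ℝ, Matrix.mulVec (A.submatrix g id) z j
        = Matrix.mulVec A z (g j) := fun z => rfl
    rw [hx, hx]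
    exact congrFun hxy (g j)
  have : A.rank = p := by
    rw [Matrix.rank, LinearMap.finrank_range_of_inj hAinj]
    simp
  exact this
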